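/- Let H be a 2-edge-connected signed graph such that |E_N(H)| ≥ 2 and H − E_N(H) is a spanning tree of H. Then for every negative edge e ∈ E_N(H), H has a signed circuit containing all edges of S_H(e). -/

import Mathlib

open scoped Classical

noncomputable section

/-- A signed (multi)graph: a finite multigraph (loops and multiple edges allowed)
together with a sign on each edge (`neg e = true` means `e` is negative). -/
structure SignedMultigraph where
  V : Type
  E : Type
  [fintypeV : Fintype V]
  [fintypeE : Fintype E]
  ends : E → Sym2 V
  neg : E → Bool

attribute [instance] SignedMultigraph.fintypeV SignedMultigraph.fintypeE

namespace SignedMultigraph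

variable (G : SignedMultigraph)

/-- The vertices incident with at least one edge of `S`. -/
def support (S : Finset G.E) : Finset G.V :=
  Finset.univ.filter fun v => ∃ e ∈ S, v ∈ G.ends e

/-- Degree of `v` in the edge set `S`; loops count twice. -/
def degIn (S : Finset G.E) (v : G.V) : ℕ :=
  ∑ e ∈ S, (if G.ends e = Sym2.diag v then 2 else if v ∈ G.ends e then 1 else 0)

/-- `u` and `v` are joined by an edge of `S`. -/
def Adj (S : Finset G.E) (u v : G.V) : Prop := ∃ e ∈ S, G.ends e = s(u, v)

/-- Reachability using only edges of `S`. -/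
def Reach (S : Finset G.E) : G.V → G.V → Prop := Relation.ReflTransGen (G.Adj S)

/-- The subgraph with edge set `S` (and vertex set its support) is connected. -/
def ConnOn (S : Finset G.E) : Prop :=
  ∀ u ∈ G.support S, ∀ v ∈ G.support S, G.Reach S u v

/-- The whole signed graph is connected. -/
def Connected : Prop := Nonempty G.V ∧ ∀ u v : G.V, G.Reach Finset.univ u v

/-- The negative edges among `S`. -/
def negEdges (S : Finset G.E) : Finset G.E := S.filter fun e => G.neg e = true

/-- A circuit: a (nonempty) connected 2-regular subgraph, given by its edge set. -/
def IsCircuit (S : Finset G.E) : Prop :=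
  S.Nonempty ∧ G.ConnOn S ∧ ∀ v ∈ G.support S, G.degIn S v = 2

/-- A balanced circuit: a circuit with an even number of negative edges. -/
def IsBalancedCircuit (S : Finset G.E) : Prop :=
  G.IsCircuit S ∧ Even (G.negEdges S).card

/-- An unbalanced circuit: a circuit with an odd number of negative edges. -/
def IsUnbalancedCircuit (S : Finset G.E) : Prop :=
  G.IsCircuit S ∧ ¬ Even (G.negEdges S).card

/-- A short barbell: two unbalanced circuits meeting at exactly one vertex. -/
def IsShortBarbell (S : Finset G.E) : Prop :=
  ∃ C₁ C₂ : Finset G.E, G.IsUnbalancedCircuit C₁ ∧ G.IsUnbalancedCircuit C₂ ∧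
    Disjoint C₁ C₂ ∧ (G.support C₁ ∩ G.support C₂).card = 1 ∧ S = C₁ ∪ C₂

/-- A path with (distinct) ends `u` and `v`, given by its edge set. -/
def IsPath (P : Finset G.E) (u v : G.V) : Prop :=
  P.Nonempty ∧ G.ConnOn P ∧ u ≠ v ∧ u ∈ G.support P ∧ v ∈ G.support P ∧
    G.degIn P u = 1 ∧ G.degIn P v = 1 ∧
    ∀ w ∈ G.support P, w ≠ u → w ≠ v → G.degIn P w = 2

/-- A long barbell: two vertex-disjoint unbalanced circuits joined by a path
meeting the circuits only at its ends. -/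
def IsLongBarbell (S : Finset G.E) : Prop :=
  ∃ (C₁ C₂ P : Finset G.E) (u v : G.V),
    G.IsUnbalancedCircuit C₁ ∧ G.IsUnbalancedCircuit C₂ ∧
    Disjoint (G.support C₁) (G.support C₂) ∧
    G.IsPath P u v ∧
    G.support P ∩ G.support C₁ = {u} ∧ G.support P ∩ G.support C₂ = {v} ∧
    Disjoint P C₁ ∧ Disjoint P C₂ ∧
    S = C₁ ∪ C₂ ∪ P

/-- A signed circuit: a balanced circuit, a short barbell, or a long barbell. -/
def IsSignedCircuit (S : Finset G.E) : Prop :=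
  G.IsBalancedCircuit S ∨ G.IsShortBarbell S ∨ G.IsLongBarbell S

/-- The number of members of the family `F` containing the edge `e`. -/
def coverCount (F : Multiset (Finset G.E)) (e : G.E) : ℕ :=
  (F.filter fun S => e ∈ S).card

/-- The total length of the family `F`. -/
def coverLength (F : Multiset (Finset G.E)) : ℕ := (F.map Finset.card).sum

/-- A signed circuit cover: every edge is in at least one member. -/
def IsSignedCircuitCover (F : Multiset (Finset G.E)) : Prop :=
  (∀ S ∈ F, G.IsSignedCircuit S) ∧ ∀ e : G.E, 1 ≤ G.coverCount F e

/-- The length of a shortest signed circuit cover. -/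
def SCC : ℕ := sInf { n | ∃ F, G.IsSignedCircuitCover F ∧ G.coverLength F = n }

/-- Whether edge `e` has exactly one endpoint in the vertex set `A`. -/
def crossesB (A : Finset G.V) (e : G.E) : Bool :=
  Sym2.lift ⟨fun x y => Bool.xor (decide (x ∈ A)) (decide (y ∈ A)),
    fun x y => Bool.xor_comm _ _⟩ (G.ends e)

/-- Sign of `e` (`true` = negative) after switching at every vertex of `A`. -/
def negAfter (A : Finset G.V) (e : G.E) : Bool :=
  Bool.xor (G.neg e) (G.crossesB A e)

/-- Minimum number of negative edges in `S` over all switchings. -/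
def negOf (S : Finset G.E) : ℕ :=
  sInf { n | ∃ A : Finset G.V, (S.filter fun e => G.negAfter A e = true).card = n }

/-- The negativeness of `G`. -/
def negativeness : ℕ := G.negOf Finset.univ

/-- The edges of `S` with exactly one endpoint in `U`: the edge boundary `δ(U)` inside `S`. -/
def boundary (S : Finset G.E) (U : Finset G.V) : Finset G.E :=
  S.filter fun e => G.crossesB U e = true

/-- `b` is a bridge of the subgraph with edge set `S`. -/
def IsBridge (S : Finset G.E) (b : G.E) : Prop :=
  ∃ U : Finset G.V, G.boundary S U = {b}

/-- The subgraph with edge set `S` is bridgeless. -/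
def Bridgeless (S : Finset G.E) : Prop := ∀ b ∈ S, ¬ G.IsBridge S b

/-- `G` is 2-edge-connected. -/
def TwoEdgeConnected : Prop :=
  G.Connected ∧ ∀ b : G.E, ¬ G.IsBridge Finset.univ b

/-- Edges of `S` lying in the same component (of the subgraph with edge set `S`)
as the vertex `x`. -/
def compEdges (S : Finset G.E) (x : G.V) : Finset G.E :=
  S.filter fun e => ∃ u, u ∈ G.ends e ∧ G.Reach S x u

/-- A g-bridge: a bridge such that both components of `G - b` have even negativeness. -/
def IsGBridge (b : G.E) : Prop :=
  G.IsBridge Finset.univ b ∧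
    ∃ x y : G.V, G.ends b = s(x, y) ∧
      Even (G.negOf (G.compEdges (Finset.univ.erase b) x)) ∧
      Even (G.negOf (G.compEdges (Finset.univ.erase b) y))

/-- `G` has no g-bridge (in any of its components). -/
def GBridgeless : Prop := ∀ b : G.E, ¬ G.IsGBridge b

/-- Member of `B_g(G)`: a bridge such that at least one component of `G - b`
contains an odd number of negative edges. -/
def IsBgBridge (b : G.E) : Prop :=
  G.IsBridge Finset.univ b ∧
    ∃ x : G.V, x ∈ G.ends b ∧
      ¬ Even (G.negEdges (G.compEdges (Finset.univ.erase b) x)).card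

/-- Member of `B_s(G)`: a bridge such that each of the two components of `G - b`
contains a negative edge. -/
def IsSBridge (b : G.E) : Prop :=
  G.IsBridge Finset.univ b ∧
    ∃ x y : G.V, G.ends b = s(x, y) ∧
      (G.negEdges (G.compEdges (Finset.univ.erase b) x)).Nonempty ∧
      (G.negEdges (G.compEdges (Finset.univ.erase b) y)).Nonempty

/-- `G` is s-bridgeless: every edge lies in some signed circuit. -/
def SBridgeless : Prop := ∀ e : G.E, ∃ S : Finset G.E, G.IsSignedCircuit S ∧ e ∈ S

/-- `{e, f}` is a 2-edge-cut of `G`. -/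
def IsTwoEdgeCut (e f : G.E) : Prop :=
  e ≠ f ∧ ∃ U : Finset G.V, G.boundary Finset.univ U = {e, f}

/-- `S_G(e) = {e} ∪ {f : {e,f} is a 2-edge-cut of G}`. -/
def SSet (e : G.E) : Finset G.E :=
  insert e (Finset.univ.filter fun f => G.IsTwoEdgeCut e f)

/-- The edge set `R` spans an acyclic subgraph (every nonempty subset has a
vertex of degree one). -/
def AcyclicSet (R : Finset G.E) : Prop :=
  ∀ F ⊆ R, F.Nonempty → ∃ v : G.V, G.degIn F v = 1

/-- `T` is the edge set of a spanning tree of `G`. -/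
def IsSpanningTree (T : Finset G.E) : Prop :=
  G.AcyclicSet T ∧ Nonempty G.V ∧ ∀ u v : G.V, G.Reach T u v

/-- `G` is eulerian: connected with all degrees even. -/
def Eulerian : Prop :=
  G.Connected ∧ ∀ v : G.V, Even (G.degIn Finset.univ v)

/-- The edge set `S` spans an eulerian subgraph. -/
def IsEulerianSub (S : Finset G.E) : Prop :=
  S.Nonempty ∧ G.ConnOn S ∧ ∀ v ∈ G.support S, Even (G.degIn S v)

/-- The vertex class of `v` after contracting each member of `ℬ`. -/
def classOf (ℬ : Finset (Finset G.E)) (v : G.V) : Finset G.V :=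
  Finset.univ.filter fun u => u = v ∨ ∃ B ∈ ℬ, v ∈ G.support B ∧ u ∈ G.support B

/-- Degree, in edge set `F`, of the contracted class of `v`. -/
def classDeg (ℬ : Finset (Finset G.E)) (F : Finset G.E) (v : G.V) : ℕ :=
  ∑ u ∈ G.classOf ℬ v, G.degIn F u

/-- `ℬ` witnesses that the subgraph with edge set `S` is a generalized barbell:
`ℬ` is a family of vertex-disjoint eulerian subgraphs of `S`, the contraction
`S/(∪ℬ)` is acyclic, and for every vertex `x` of the contracted graph,
`|E_N(B_x)| ≡ |δ(V(B_x))| (mod 2)`. -/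
def GenBarbellWitness (S : Finset G.E) (ℬ : Finset (Finset G.E)) : Prop :=
  (∀ B ∈ ℬ, B ⊆ S ∧ G.IsEulerianSub B) ∧
  (∀ B₁ ∈ ℬ, ∀ B₂ ∈ ℬ, B₁ ≠ B₂ → Disjoint (G.support B₁) (G.support B₂)) ∧
  (∀ F ⊆ S \ ℬ.sup id, F.Nonempty → ∃ v : G.V, G.classDeg ℬ F v = 1) ∧
  (∀ B ∈ ℬ, (G.negEdges B).card ≡ (G.boundary S (G.support B)).card [MOD 2]) ∧
  (∀ v ∈ G.support S, (∀ B ∈ ℬ, v ∉ G.support B) → Even (G.boundary S {v}).card)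

/-- The subgraph with edge set `S` is a generalized barbell. -/
def IsGenBarbell (S : Finset G.E) : Prop := ∃ ℬ, G.GenBarbellWitness S ℬ

end SignedMultigraph
namespace SignedMultigraph

variable {G : SignedMultigraph}

/-! ### Basic lemmas -/

lemma sym2_exists (p : Sym2 G.V) : ∃ a b, p = s(a, b) := by
  induction p using Sym2.inductionOn with
  | _ a b => exact ⟨a, b, rfl⟩

/-- contribution of an edge to the degree of a vertex -/
def cV (G : SignedMultigraph) (e : G.E) (v : G.V) : ℕ :=
  if G.ends e = Sym2.diag v then 2 else if v ∈ G.ends e then 1 else 0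

lemma degIn_eq_sum_cV (S : Finset G.E) (v : G.V) : G.degIn S v = ∑ e ∈ S, G.cV e v := rfl

lemma cV_pos {e : G.E} {v : G.V} (h : v ∈ G.ends e) : 1 ≤ G.cV e v := by
  unfold cV; split_ifs <;> omega

lemma cV_eq_zero {e : G.E} {v : G.V} (h : v ∉ G.ends e) : G.cV e v = 0 := by
  unfold cV
  have hd : ¬ (G.ends e = Sym2.diag v) := by
    intro hh; exact h (hh ▸ (by exact Sym2.mem_mk_left v v : v ∈ Sym2.diag v))
  split_ifs <;> simp_all

lemma cV_loop {e : G.E} {a : G.V} (h : G.ends e = s(a, a)) (v : G.V) :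
    G.cV e v = if v = a then 2 else 0 := by
  unfold cV
  rw [h]
  by_cases hv : v = a
  · subst hv; simp [Sym2.diag]
  · have h1 : ¬ (s(a,a) = Sym2.diag v) := by
      simp only [Sym2.diag, Sym2.eq_iff]
      intro hh; rcases hh with ⟨h1, _⟩ | ⟨h1, _⟩ <;> exact hv h1.symm
    have h2 : v ∉ s(a,a) := by
      rw [Sym2.mem_iff]; intro hh; rcases hh with h1 | h1 <;> exact hv h1
    simp [h1, h2, hv]

lemma cV_mk {e : G.E} {a b : G.V} (hab : a ≠ b) (h : G.ends e = s(a, b)) (v : G.V) :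
    G.cV e v = (if v = a then 1 else 0) + (if v = b then 1 else 0) := by
  unfold cV
  rw [h]
  have h1 : ¬ (s(a,b) = Sym2.diag v) := by
    simp only [Sym2.diag, Sym2.eq_iff]
    rintro (⟨h1, h2⟩ | ⟨h1, h2⟩) <;> exact hab (h1.trans h2.symm)
  rw [if_neg h1]
  by_cases hva : v = a <;> by_cases hvb : v = b <;> simp_all [Sym2.mem_iff]

lemma mem_support {S : Finset G.E} {v : G.V} :
    v ∈ G.support S ↔ ∃ e ∈ S, v ∈ G.ends e := by
  simp [support]

lemma mem_support_of_edge {S : Finset G.E} {e : G.E} {v : G.V}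
    (he : e ∈ S) (hv : v ∈ G.ends e) : v ∈ G.support S :=
  mem_support.mpr ⟨e, he, hv⟩

lemma degIn_pos {S : Finset G.E} {e : G.E} {v : G.V} (he : e ∈ S) (hv : v ∈ G.ends e) :
    1 ≤ G.degIn S v := by
  rw [degIn_eq_sum_cV]
  calc 1 ≤ G.cV e v := cV_pos hv
    _ ≤ _ := Finset.single_le_sum (f := fun e => G.cV e v) (fun i _ => Nat.zero_le _) he

lemma degIn_eq_zero {S : Finset G.E} {v : G.V} (h : v ∉ G.support S) :
    G.degIn S v = 0 := by
  rw [degIn_eq_sum_cV]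
  refine Finset.sum_eq_zero fun e heS => cV_eq_zero fun hv => h (mem_support_of_edge heS hv)

lemma mem_support_of_degIn_pos {S : Finset G.E} {v : G.V} (h : 1 ≤ G.degIn S v) :
    v ∈ G.support S := by
  by_contra hc; rw [degIn_eq_zero hc] at h; omega

lemma degIn_union_inter (S S' : Finset G.E) (v : G.V) :
    G.degIn (S ∪ S') v + G.degIn (S ∩ S') v = G.degIn S v + G.degIn S' v := by
  simp only [degIn_eq_sum_cV]; exact Finset.sum_union_inter

lemma degIn_sdiff_add {S S' : Finset G.E} (h : S' ⊆ S) (v : G.V) :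
    G.degIn (S \ S') v + G.degIn S' v = G.degIn S v := by
  simp only [degIn_eq_sum_cV]; exact Finset.sum_sdiff h

lemma degIn_insert {S : Finset G.E} {e : G.E} (h : e ∉ S) (v : G.V) :
    G.degIn (insert e S) v = G.cV e v + G.degIn S v := by
  simp only [degIn_eq_sum_cV]; exact Finset.sum_insert h

lemma adj_symm {S : Finset G.E} {u v : G.V} (h : G.Adj S u v) : G.Adj S v u := by
  obtain ⟨e, he, hends⟩ := h; exact ⟨e, he, by rw [hends, Sym2.eq_swap]⟩

lemma reach_symm {S : Finset G.E} {u v : G.V} (h : G.Reach S u v) : G.Reach S v u := by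
  induction h with
  | refl => exact Relation.ReflTransGen.refl
  | tail _ hstep ih => exact Relation.ReflTransGen.head (adj_symm hstep) ih

lemma reach_mono {S S' : Finset G.E} (h : S ⊆ S') {u v : G.V} (hr : G.Reach S u v) :
    G.Reach S' u v :=
  (Relation.ReflTransGen.mono (fun _ _ ⟨e, he, hends⟩ => ⟨e, h he, hends⟩) :
    Relation.ReflTransGen (G.Adj S) ≤ Relation.ReflTransGen (G.Adj S')) u v hr

end SignedMultigraph
namespace SignedMultigraph

/-- A walk in the subgraph with edge set `S`, recording its vertex and edge lists. -/
inductive Walk (G : SignedMultigraph) (S : Finset G.E) : G.V → G.V → List G.V → List G.E → Prop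
  | nil (v : G.V) : Walk G S v v [v] []
  | cons {u v w : G.V} {vs : List G.V} {es : List G.E} (e : G.E)
      (he : e ∈ S) (hends : G.ends e = s(u, v)) (hw : Walk G S v w vs es) :
      Walk G S u w (u :: vs) (e :: es)

variable {G : SignedMultigraph} {S S' : Finset G.E}

namespace Walk

lemma edges_mem {u w vs es} (h : Walk G S u w vs es) : ∀ e ∈ es, e ∈ S := by
  induction h with
  | nil => simp
  | cons e he hends hw ih =>
    intro f hf
    rcases List.mem_cons.mp hf with rfl | hf
    · exact he
    · exact ih f hf

lemma mono (hSS : S ⊆ S') {u w vs es} (h : Walk G S u w vs es) : Walk G S' u w vs es := by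
  induction h with
  | nil v => exact nil v
  | cons e he hends hw ih => exact cons e (hSS he) hends ih

lemma start_mem {u w vs es} (h : Walk G S u w vs es) : u ∈ vs := by
  cases h <;> simp

lemma head_eq {u w vs es} (h : Walk G S u w vs es) : ∃ t, vs = u :: t := by
  cases h <;> simp

lemma end_mem {u w vs es} (h : Walk G S u w vs es) : w ∈ vs := by
  induction h with
  | nil => simp
  | cons e he hends hw ih => exact List.mem_cons_of_mem _ ih

lemma nil_inv {u w vs} (h : Walk G S u w vs []) : w = u ∧ vs = [u] := by
  cases h; exact ⟨rfl, rfl⟩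

lemma length_eq {u w vs es} (h : Walk G S u w vs es) : vs.length = es.length + 1 := by
  induction h with
  | nil => simp
  | cons e he hends hw ih => simp [ih]

lemma ends_mem {u w vs es} (h : Walk G S u w vs es) {e : G.E} (he : e ∈ es) :
    ∀ x ∈ G.ends e, x ∈ vs := by
  induction h with
  | nil => simp at he
  | cons f hf hends hw ih =>
    rcases List.mem_cons.mp he with rfl | he'
    · intro x hx
      rw [hends, Sym2.mem_iff] at hx
      rcases hx with rfl | rfl
      · exact List.mem_cons_self
      · exact List.mem_cons_of_mem _ hw.start_mem
    · intro x hx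
      exact List.mem_cons_of_mem _ (ih he' x hx)

lemma closed_nodup {u vs es} (h : Walk G S u u vs es) (hnd : vs.Nodup) : es = [] := by
  cases h with
  | nil => rfl
  | cons e he hends hw =>
    exfalso
    have : u ∈ _ := hw.end_mem
    simp only [List.nodup_cons] at hnd
    exact hnd.1 this

lemma eq_last {u w vs es} (h : Walk G S u w vs es) :
    ∀ l z, vs = l ++ [z] → z = w := by
  induction h with
  | nil v =>
    intro l z hl
    have hlen := congrArg List.length hl
    simp at hlen
    subst hlen
    simpa using hl.symm
  | cons e he hends hw ih =>
    intro l z hl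
    cases l with
    | nil =>
      simp at hl
      obtain ⟨rfl, h2⟩ := hl
      have := hw.start_mem
      rw [h2] at this
      simp at this
    | cons a l' =>
      simp only [List.cons_append, List.cons.injEq] at hl
      exact ih l' z hl.2

lemma edges_nodup {u w vs es} (h : Walk G S u w vs es) (hnd : vs.Nodup) : es.Nodup := by
  induction h with
  | nil => simp
  | cons e he hends hw ih =>
    rename_i u' v' w' vs' es'
    simp only [List.nodup_cons] at hnd ⊢
    refine ⟨fun hmem => ?_, ih hnd.2⟩
    have : u' ∈ vs' := hw.ends_mem hmem u' (by rw [hends]; exact Sym2.mem_mk_left _ _)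
    exact hnd.1 this

lemma edge_ends_ne {u w vs es} (h : Walk G S u w vs es) (hnd : vs.Nodup) {e : G.E}
    (he : e ∈ es) : ∃ a b, a ≠ b ∧ G.ends e = s(a, b) := by
  induction h with
  | nil => simp at he
  | cons f hf hends hw ih =>
    simp only [List.nodup_cons] at hnd
    rcases List.mem_cons.mp he with rfl | he'
    · rename_i u' v' w' vs' es'
      refine ⟨u', v', fun hc => ?_, hends⟩
      rw [hc] at hnd
      exact hnd.1 hw.start_mem
    · exact ih hnd.2 he'

lemma reach {u w vs es} (h : Walk G S u w vs es) : ∀ x ∈ vs, G.Reach es.toFinset u x := by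
  induction h with
  | nil v =>
    intro x hx
    simp at hx
    subst hx
    exact Relation.ReflTransGen.refl
  | cons e he hends hw ih =>
    rename_i u' v' w' vs' es'
    intro x hx
    rcases List.mem_cons.mp hx with rfl | hx'
    · exact Relation.ReflTransGen.refl
    · refine Relation.ReflTransGen.head (b := v') ⟨e, by simp, hends⟩ ?_
      exact reach_mono (fun f hf => by simp at hf ⊢; tauto) (ih x hx')

lemma split {u w vs es} (h : Walk G S u w vs es) :
    ∀ l₁ x l₂, vs = l₁ ++ x :: l₂ →
      ∃ es₁ es₂, es = es₁ ++ es₂ ∧ es₁.length = l₁.length ∧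
        Walk G S u x (l₁ ++ [x]) es₁ ∧ Walk G S x w (x :: l₂) es₂ := by
  induction h with
  | nil v =>
    intro l₁ x l₂ hl
    have hlen := congrArg List.length hl
    simp at hlen
    have h1 : l₁ = [] := List.eq_nil_of_length_eq_zero (by omega)
    have h2 : l₂ = [] := List.eq_nil_of_length_eq_zero (by omega)
    subst h1; subst h2
    simp at hl
    subst hl
    exact ⟨[], [], rfl, rfl, nil _, nil _⟩
  | cons e he hends hw ih =>
    intro l₁ x l₂ hl
    cases l₁ with
    | nil =>
      simp at hl
      obtain ⟨rfl, h2⟩ := hl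
      refine ⟨[], _, rfl, rfl, nil _, ?_⟩
      subst h2
      exact cons e he hends hw
    | cons a l₁' =>
      simp only [List.cons_append, List.cons.injEq] at hl
      obtain ⟨rfl, h2⟩ := hl
      obtain ⟨es₁, es₂, rfl, hlen, hw1, hw2⟩ := ih l₁' x l₂ h2
      exact ⟨e :: es₁, es₂, rfl, by simp [hlen], cons e he hends hw1, hw2⟩

lemma append_aux {u x vs₁ es₁} (h₁ : Walk G S u x vs₁ es₁) :
    ∀ w l₃ es₂, Walk G S x w (x :: l₃) es₂ →
      ∀ l₁, vs₁ = l₁ ++ [x] → Walk G S u w (l₁ ++ x :: l₃) (es₁ ++ es₂) := by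
  induction h₁ with
  | nil v =>
    intro w l₃ es₂ h₂ l₁ hl
    have hlen := congrArg List.length hl
    simp at hlen
    subst hlen
    simpa using h₂
  | cons e he hends hw ih =>
    intro w l₃ es₂ h₂ l₁ hl
    cases l₁ with
    | nil =>
      exfalso
      simp at hl
      have := hw.start_mem
      rw [hl.2] at this
      simp at this
    | cons a l₁' =>
      simp only [List.cons_append, List.cons.injEq] at hl
      obtain ⟨rfl, h2⟩ := hl
      exact cons e he hends (ih w l₃ es₂ h₂ l₁' h2)

lemma append {u x w l₁ l₃ es₁ es₂} (h₁ : Walk G S u x (l₁ ++ [x]) es₁)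
    (h₂ : Walk G S x w (x :: l₃) es₂) :
    Walk G S u w (l₁ ++ x :: l₃) (es₁ ++ es₂) :=
  append_aux h₁ w l₃ es₂ h₂ l₁ rfl

end Walk

end SignedMultigraph
namespace SignedMultigraph

variable {G : SignedMultigraph} {S : Finset G.E}

lemma support_mono {S S' : Finset G.E} (h : S ⊆ S') : G.support S ⊆ G.support S' := by
  intro v hv
  obtain ⟨e, he, hve⟩ := mem_support.mp hv
  exact mem_support.mpr ⟨e, h he, hve⟩

lemma not_nodup_split {α : Type*} {l : List α} (h : ¬ l.Nodup) :
    ∃ (a : α) (l₁ l₂ l₃ : List α), l = l₁ ++ a :: (l₂ ++ a :: l₃) := by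
  induction l with
  | nil => simp at h
  | cons x xs ih =>
    by_cases hx : x ∈ xs
    · obtain ⟨s, t, rfl⟩ := List.append_of_mem hx
      exact ⟨x, [], s, t, rfl⟩
    · have hxs : ¬ xs.Nodup := fun hnd => h (List.nodup_cons.mpr ⟨hx, hnd⟩)
      obtain ⟨a, l₁, l₂, l₃, rfl⟩ := ih hxs
      exact ⟨a, x :: l₁, l₂, l₃, rfl⟩

lemma Walk.toNodup_aux {u w : G.V} :
    ∀ n {vs es}, es.length ≤ n → Walk G S u w vs es →
      ∃ vs' es', Walk G S u w vs' es' ∧ vs'.Nodup := by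
  intro n
  induction n with
  | zero =>
    intro vs es hle h
    have : es = [] := List.eq_nil_of_length_eq_zero (by omega)
    subst this
    obtain ⟨rfl, rfl⟩ := h.nil_inv
    exact ⟨_, _, h, by simp⟩
  | succ n ih =>
    intro vs es hle h
    by_cases hnd : vs.Nodup
    · exact ⟨vs, es, h, hnd⟩
    · obtain ⟨a, l₁, l₂, l₃, hvs⟩ := not_nodup_split hnd
      obtain ⟨es₁, es₂, hes, hlen1, hw1, hw2⟩ := h.split l₁ a (l₂ ++ a :: l₃) hvs
      obtain ⟨es₃, es₄, hes2, hlen3, hw3, hw4⟩ :=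
        hw2.split (a :: l₂) a l₃ (by simp)
      have hlen : (es₁ ++ es₄).length ≤ n := by
        have h1 := congrArg List.length hes
        have h2 := congrArg List.length hes2
        simp only [List.length_append, List.length_cons] at h1 h2 hlen3 ⊢
        omega
      exact ih hlen (hw1.append hw4)

lemma Walk.toNodup {u w : G.V} {vs es} (h : Walk G S u w vs es) :
    ∃ vs' es', Walk G S u w vs' es' ∧ vs'.Nodup :=
  Walk.toNodup_aux es.length le_rfl h

lemma reach_walk {u v : G.V} (h : G.Reach S u v) :
    ∃ vs es, Walk G S u v vs es ∧ vs.Nodup := by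
  have hex : ∃ vs es, Walk G S u v vs es := by
    induction h using Relation.ReflTransGen.head_induction_on with
    | refl => exact ⟨[v], [], Walk.nil v⟩
    | head hadj _ ih =>
      obtain ⟨vs, es, hw⟩ := ih
      obtain ⟨e, he, hends⟩ := hadj
      exact ⟨_, _, Walk.cons e he hends hw⟩
  obtain ⟨vs, es, hw⟩ := hex
  exact hw.toNodup

lemma Walk.degIn_formula {u w vs es} (h : Walk G S u w vs es) (hnd : vs.Nodup) (x : G.V) :
    G.degIn es.toFinset x + (if x = u then 1 else 0) + (if x = w then 1 else 0)
      = if x ∈ vs then 2 else 0 := by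
  induction h with
  | nil v =>
    have h0 : ∀ y, G.degIn (∅ : Finset G.E) y = 0 := by simp [degIn]
    by_cases hx : x = v <;> simp [hx, h0]
  | cons e he hends hw ih =>
    rename_i u' v' w' vs' es'
    simp only [List.nodup_cons] at hnd
    have hu'vs' : u' ∉ vs' := hnd.1
    have hv'vs' : v' ∈ vs' := hw.start_mem
    have hu'v' : u' ≠ v' := fun hh => hu'vs' (hh ▸ hv'vs')
    have he' : e ∉ es'.toFinset := by
      simp only [List.mem_toFinset]
      intro hmem
      exact hu'vs' (hw.ends_mem hmem u' (by rw [hends]; exact Sym2.mem_mk_left _ _))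
    rw [List.toFinset_cons, degIn_insert he', cV_mk hu'v' hends]
    have ihx := ih hnd.2
    simp only [List.mem_cons]
    have hwvs : w' ∈ vs' := hw.end_mem
    by_cases h1 : x = u' <;> by_cases h2 : x = v' <;> by_cases h3 : x ∈ vs' <;>
      by_cases h4 : x = w' <;>
      simp only [h1, h2, h3, h4, if_true, if_false, iff_true, true_or, or_true, false_or,
        or_false] at ihx ⊢ <;>
      simp_all <;> omega

lemma Walk.support_subset {u w vs es} (h : Walk G S u w vs es) :
    ∀ x ∈ G.support es.toFinset, x ∈ vs := fun x hx => by
  obtain ⟨e, he, hxe⟩ := mem_support.mp hx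
  exact h.ends_mem (List.mem_toFinset.mp he) x hxe

lemma Walk.mem_support {u w vs es} (h : Walk G S u w vs es) (hne : es ≠ []) :
    ∀ x ∈ vs, x ∈ G.support es.toFinset := by
  induction h with
  | nil => exact absurd rfl hne
  | cons e he hends hw ih =>
    rename_i u' v' w' vs' es'
    intro x hx
    rcases List.mem_cons.mp hx with rfl | hx'
    · exact mem_support_of_edge (e := e) (by simp) (by rw [hends]; exact Sym2.mem_mk_left _ _)
    · cases es' with
      | nil =>
        obtain ⟨rfl, hvs⟩ := hw.nil_inv
        rw [hvs] at hx'
        simp at hx'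
        subst hx'
        exact mem_support_of_edge (e := e) (by simp) (by rw [hends]; exact Sym2.mem_mk_right _ _)
      | cons f es'' =>
        have hmem := ih (by simp) x hx'
        refine support_mono ?_ hmem
        intro g hg
        simp at hg ⊢
        tauto

end SignedMultigraph
namespace SignedMultigraph

variable {G : SignedMultigraph}

lemma acyclic_even_empty {T F : Finset G.E} (hacyc : G.AcyclicSet T) (hFT : F ⊆ T)
    (hev : ∀ v, Even (G.degIn F v)) : F = ∅ := by
  by_contra hne
  obtain ⟨v, hv⟩ := hacyc F hFT (Finset.nonempty_of_ne_empty hne)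
  have h := hev v
  rw [hv, Nat.even_iff] at h
  omega

lemma walk_unique {T : Finset G.E} (hacyc : G.AcyclicSet T) {u w : G.V}
    {vs₁ es₁ vs₂ es₂} (h₁ : Walk G T u w vs₁ es₁) (hnd₁ : vs₁.Nodup)
    (h₂ : Walk G T u w vs₂ es₂) (hnd₂ : vs₂.Nodup) :
    es₁.toFinset = es₂.toFinset := by
  set F₁ := es₁.toFinset with hF₁
  set F₂ := es₂.toFinset with hF₂
  have hpar : ∀ x, (G.degIn F₁ x + G.degIn F₂ x) % 2 = 0 := by
    intro x
    have q₁ := h₁.degIn_formula hnd₁ x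
    have q₂ := h₂.degIn_formula hnd₂ x
    rw [← hF₁] at q₁
    rw [← hF₂] at q₂
    split_ifs at q₁ q₂ <;> omega
  by_contra hne
  set D := (F₁ ∪ F₂) \ (F₁ ∩ F₂) with hD
  have hDT : D ⊆ T := by
    intro g hg
    rw [hD, Finset.mem_sdiff, Finset.mem_union] at hg
    rcases hg.1 with hg1 | hg1
    · exact h₁.edges_mem g (List.mem_toFinset.mp hg1)
    · exact h₂.edges_mem g (List.mem_toFinset.mp hg1)
  have hDev : ∀ v, Even (G.degIn D v) := by
    intro v
    have h1 := degIn_union_inter (G := G) F₁ F₂ v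
    have h2 := degIn_sdiff_add (G := G) (Finset.inter_subset_union (s := F₁) (t := F₂)) v
    rw [← hD] at h2
    have h3 := hpar v
    rw [Nat.even_iff]
    omega
  have hDempty : D = ∅ := acyclic_even_empty hacyc hDT hDev
  apply hne
  have hsub : F₁ ∪ F₂ ⊆ F₁ ∩ F₂ := by
    rw [← Finset.sdiff_eq_empty_iff_subset]
    exact hDempty
  ext g
  constructor
  · intro hg
    exact (Finset.mem_inter.mp (hsub (Finset.mem_union_left _ hg))).2
  · intro hg
    exact (Finset.mem_inter.mp (hsub (Finset.mem_union_right _ hg))).1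

lemma shared_edge {T : Finset G.E} (hacyc : G.AcyclicSet T)
    {x₁ y₁ x₂ y₂ : G.V} {vs₁ es₁ vs₂ es₂}
    (h₁ : Walk G T x₁ y₁ vs₁ es₁) (h₂ : Walk G T x₂ y₂ vs₂ es₂)
    {p q : G.V} (hp₁ : p ∈ vs₁) (hp₂ : p ∈ vs₂) (hq₁ : q ∈ vs₁) (hq₂ : q ∈ vs₂)
    (hpq : p ≠ q) :
    ∃ h, h ∈ es₁.toFinset ∧ h ∈ es₂.toFinset ∧ p ∈ G.ends h := by
  have r₁ : G.Reach es₁.toFinset p q :=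
    Relation.ReflTransGen.trans (reach_symm (h₁.reach p hp₁)) (h₁.reach q hq₁)
  have r₂ : G.Reach es₂.toFinset p q :=
    Relation.ReflTransGen.trans (reach_symm (h₂.reach p hp₂)) (h₂.reach q hq₂)
  obtain ⟨ws₁, fs₁, hW₁, hWnd₁⟩ := reach_walk r₁
  obtain ⟨ws₂, fs₂, hW₂, hWnd₂⟩ := reach_walk r₂
  have hsub₁ : es₁.toFinset ⊆ T := by
    intro g hg; exact h₁.edges_mem g (List.mem_toFinset.mp hg)
  have hsub₂ : es₂.toFinset ⊆ T := by
    intro g hg; exact h₂.edges_mem g (List.mem_toFinset.mp hg)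
  have heq := walk_unique hacyc (hW₁.mono hsub₁) hWnd₁ (hW₂.mono hsub₂) hWnd₂
  cases hW₁ with
  | nil => exact absurd rfl hpq
  | cons e he hends hw =>
    refine ⟨e, he, ?_, by rw [hends]; exact Sym2.mem_mk_left _ _⟩
    have he1 : e ∈ fs₂.toFinset := by
      rw [← heq]
      simp
    exact hW₂.edges_mem e (List.mem_toFinset.mp he1)

lemma fund_spec {e : G.E} (he : e ∈ G.negEdges Finset.univ)
    {x y : G.V} {vs : List G.V} {es : List G.E}
    (hends : G.ends e = s(x, y))
    (hw : Walk G (Finset.univ \ G.negEdges Finset.univ) x y vs es) (hnd : vs.Nodup) :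
    (∀ v, G.degIn (insert e es.toFinset) v = if v ∈ vs then 2 else 0) ∧
      G.IsUnbalancedCircuit (insert e es.toFinset) ∧
      G.negEdges (insert e es.toFinset) = {e} ∧
      (∀ v, v ∈ G.support (insert e es.toFinset) ↔ v ∈ vs) := by
  have hneg : G.neg e = true := (Finset.mem_filter.mp he).2
  have hesT : ∀ g ∈ es, g ∈ Finset.univ \ G.negEdges Finset.univ := hw.edges_mem
  have hTnotneg : ∀ g ∈ Finset.univ \ G.negEdges Finset.univ, G.neg g ≠ true := by
    intro g hg hb
    rw [Finset.mem_sdiff] at hg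
    exact hg.2 (Finset.mem_filter.mpr ⟨Finset.mem_univ g, hb⟩)
  have hees : e ∉ es.toFinset := by
    intro hc
    exact hTnotneg e (hesT e (List.mem_toFinset.mp hc)) hneg
  have hdeg : ∀ v, G.degIn (insert e es.toFinset) v = if v ∈ vs then 2 else 0 := by
    intro v
    rw [degIn_insert hees]
    by_cases hxy : x = y
    · subst hxy
      have hes : es = [] := hw.closed_nodup hnd
      subst hes
      obtain ⟨-, hvs⟩ := hw.nil_inv
      rw [hvs]
      have h0 : G.degIn (List.toFinset ([] : List G.E)) v = 0 := by simp [degIn]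
      rw [h0, cV_loop hends v]
      by_cases hv : v = x <;> simp [hv]
    · have hq := hw.degIn_formula hnd v
      rw [cV_mk hxy hends v]
      split_ifs at hq ⊢ <;> omega
  have hsupp : ∀ v, v ∈ G.support (insert e es.toFinset) ↔ v ∈ vs := by
    intro v
    constructor
    · intro hv
      obtain ⟨g, hg, hvg⟩ := mem_support.mp hv
      rcases Finset.mem_insert.mp hg with rfl | hg'
      · rw [hends, Sym2.mem_iff] at hvg
        rcases hvg with rfl | rfl
        · exact hw.start_mem
        · exact hw.end_mem
      · exact hw.ends_mem (List.mem_toFinset.mp hg') v hvg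
    · intro hv
      apply mem_support_of_degIn_pos
      rw [hdeg v, if_pos hv]
      omega
  have hconn : G.ConnOn (insert e es.toFinset) := by
    intro a ha b hb
    have ra := hw.reach a ((hsupp a).mp ha)
    have rb := hw.reach b ((hsupp b).mp hb)
    have hsub : es.toFinset ⊆ insert e es.toFinset := Finset.subset_insert _ _
    exact Relation.ReflTransGen.trans (reach_symm (reach_mono hsub ra)) (reach_mono hsub rb)
  have hnegE : G.negEdges (insert e es.toFinset) = {e} := by
    ext g
    simp only [negEdges, Finset.mem_filter, Finset.mem_insert, Finset.mem_singleton]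
    constructor
    · rintro ⟨rfl | hg, hb⟩
      · rfl
      · exact absurd hb (hTnotneg g (hesT g (List.mem_toFinset.mp hg)))
    · rintro rfl
      exact ⟨Or.inl rfl, hneg⟩
  refine ⟨hdeg, ⟨⟨⟨e, Finset.mem_insert_self _ _⟩, hconn, fun v hv => ?_⟩, ?_⟩, hnegE, hsupp⟩
  · rw [hdeg v, if_pos ((hsupp v).mp hv)]
  · rw [hnegE]
    simp

lemma even_negpart_unique (hacyc : G.AcyclicSet (Finset.univ \ G.negEdges Finset.univ))
    {F C : Finset G.E}
    (hF : ∀ v, Even (G.degIn F v)) (hC : ∀ v, Even (G.degIn C v))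
    (hFneg : G.negEdges F = G.negEdges C) : F = C := by
  set D := (F ∪ C) \ (F ∩ C) with hD
  have hDT : D ⊆ Finset.univ \ G.negEdges Finset.univ := by
    intro g hg
    rw [hD, Finset.mem_sdiff, Finset.mem_union, Finset.mem_inter] at hg
    rw [Finset.mem_sdiff]
    refine ⟨Finset.mem_univ g, fun hneg => ?_⟩
    have hb : G.neg g = true := (Finset.mem_filter.mp hneg).2
    have hFC : g ∈ F ↔ g ∈ C := by
      constructor
      · intro h1
        have : g ∈ G.negEdges F := Finset.mem_filter.mpr ⟨h1, hb⟩
        rw [hFneg] at this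
        exact (Finset.mem_filter.mp this).1
      · intro h1
        have : g ∈ G.negEdges C := Finset.mem_filter.mpr ⟨h1, hb⟩
        rw [← hFneg] at this
        exact (Finset.mem_filter.mp this).1
    rcases hg.1 with h1 | h1
    · exact hg.2 ⟨h1, hFC.mp h1⟩
    · exact hg.2 ⟨hFC.mpr h1, h1⟩
  have hDev : ∀ v, Even (G.degIn D v) := by
    intro v
    have h1 := degIn_union_inter (G := G) F C v
    have h2 := degIn_sdiff_add (G := G) (Finset.inter_subset_union (s := F) (t := C)) v
    rw [← hD] at h2
    have h3 := Nat.even_iff.mp (hF v)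
    have h4 := Nat.even_iff.mp (hC v)
    rw [Nat.even_iff]
    omega
  have hDempty : D = ∅ := acyclic_even_empty hacyc hDT hDev
  have hsub : F ∪ C ⊆ F ∩ C := by
    rw [← Finset.sdiff_eq_empty_iff_subset]
    exact hDempty
  ext g
  constructor
  · intro hg
    exact (Finset.mem_inter.mp (hsub (Finset.mem_union_left _ hg))).2
  · intro hg
    exact (Finset.mem_inter.mp (hsub (Finset.mem_union_right _ hg))).1

lemma boundary_card_parity (S : Finset G.E) (U : Finset G.V) :
    (G.boundary S U).card % 2 = (∑ v ∈ U, G.degIn S v) % 2 := by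
  have hswap : (∑ v ∈ U, G.degIn S v) = ∑ e ∈ S, ∑ v ∈ U, G.cV e v := by
    simp only [degIn_eq_sum_cV]
    exact Finset.sum_comm
  have hedge : ∀ e ∈ S, (∑ v ∈ U, G.cV e v) % 2
      = (if G.crossesB U e = true then 1 else 0) % 2 := by
    intro e _
    obtain ⟨a, b, hab⟩ := sym2_exists (G.ends e)
    have hcross : G.crossesB U e = Bool.xor (decide (a ∈ U)) (decide (b ∈ U)) := by
      unfold crossesB
      rw [hab, Sym2.lift_mk]
    by_cases hab' : a = b
    · subst hab'
      have hc : ∀ v, G.cV e v = if v = a then 2 else 0 := cV_loop hab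
      rw [Finset.sum_congr rfl fun v _ => hc v, Finset.sum_ite_eq' U a fun _ => 2, hcross]
      by_cases ha : a ∈ U <;> simp [ha]
    · have hc : ∀ v, G.cV e v = (if v = a then 1 else 0) + (if v = b then 1 else 0) :=
        cV_mk hab' hab
      rw [Finset.sum_congr rfl fun v _ => hc v, Finset.sum_add_distrib,
        Finset.sum_ite_eq' U a (fun _ => 1), Finset.sum_ite_eq' U b (fun _ => 1), hcross]
      by_cases ha : a ∈ U <;> by_cases hb : b ∈ U <;> simp [ha, hb]
  have h1 : (∑ e ∈ S, ∑ v ∈ U, G.cV e v) % 2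
      = (∑ e ∈ S, if G.crossesB U e = true then 1 else 0) % 2 := by
    rw [Finset.sum_nat_mod S 2 fun e => ∑ v ∈ U, G.cV e v,
      Finset.sum_nat_mod S 2 fun e => if G.crossesB U e = true then 1 else 0]
    congr 1
    exact Finset.sum_congr rfl hedge
  rw [boundary, Finset.card_filter, hswap, h1]

lemma evencut {W : Finset G.E} (hWev : ∀ v, Even (G.degIn W v)) {e f : G.E} (hef : e ≠ f)
    {U : Finset G.V} (hU : G.boundary Finset.univ U = {e, f}) (heW : e ∈ W) : f ∈ W := by
  have hmemiff : ∀ g, G.crossesB U g = true ↔ g ∈ ({e, f} : Finset G.E) := by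
    intro g
    rw [← hU]
    simp [boundary]
  have hbW : G.boundary W U = W ∩ {e, f} := by
    ext g
    simp only [boundary, Finset.mem_filter, Finset.mem_inter, hmemiff g]
  have hpar := boundary_card_parity (G := G) W U
  have hevensum : (∑ v ∈ U, G.degIn W v) % 2 = 0 := by
    rw [Finset.sum_nat_mod]
    rw [Finset.sum_congr rfl fun v _ => Nat.even_iff.mp (hWev v)]
    simp
  have hcard : (W ∩ {e, f}).card % 2 = 0 := by
    rw [← hbW]
    omega
  have hein : e ∈ W ∩ ({e, f} : Finset G.E) := Finset.mem_inter.mpr ⟨heW, by simp⟩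
  have hsub : W ∩ {e, f} ⊆ {e, f} := Finset.inter_subset_right
  have hcard2 : ({e, f} : Finset G.E).card = 2 := Finset.card_pair hef
  have hle : (W ∩ {e, f}).card ≤ 2 := by
    calc (W ∩ {e, f}).card ≤ ({e, f} : Finset G.E).card := Finset.card_le_card hsub
      _ = 2 := hcard2
  have hge : 1 ≤ (W ∩ {e, f}).card := Finset.card_pos.mpr ⟨e, hein⟩
  have heqc : W ∩ {e, f} = {e, f} := Finset.eq_of_subset_of_card_le hsub (by omega)
  have : f ∈ W ∩ ({e, f} : Finset G.E) := by
    rw [heqc]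
    simp
  exact (Finset.mem_inter.mp this).1

end SignedMultigraph
open SignedMultigraph

/-- Let `H` be a 2-edge-connected signed graph with
`|E_N(H)| ≥ 2` such that `H − E_N(H)` is a spanning tree of `H`. Then for every
negative edge `e`, `H` has a signed circuit containing all edges of `S_H(e)`. -/
theorem signed_circuit_contains_SSet (G : SignedMultigraph)
    (h2ec : G.TwoEdgeConnected)
    (hn : 2 ≤ (G.negEdges Finset.univ).card)
    (htree : G.IsSpanningTree (Finset.univ \ G.negEdges Finset.univ)) :
    ∀ e ∈ G.negEdges Finset.univ,
      ∃ S : Finset G.E, G.IsSignedCircuit S ∧ G.SSet e ⊆ S := by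
  classical
  obtain ⟨hacyc, hneV, hreach⟩ := htree
  intro e he
  have hnege : G.neg e = true := (Finset.mem_filter.mp he).2
  -- Final glue: it suffices to exhibit a signed circuit S together with an
  -- "all-degrees-even" subset W of S containing e.
  have final : ∀ S W : Finset G.E, W ⊆ S → e ∈ W → (∀ v, Even (G.degIn W v)) →
      G.IsSignedCircuit S → ∃ S' : Finset G.E, G.IsSignedCircuit S' ∧ G.SSet e ⊆ S' := by
    intro S W hWS heW hWev hsc
    refine ⟨S, hsc, fun f hf => ?_⟩
    have hf2 : f = e ∨ G.IsTwoEdgeCut e f := by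
      simpa [SignedMultigraph.SSet, Finset.mem_insert, Finset.mem_filter] using hf
    rcases hf2 with rfl | ⟨hef, U, hU⟩
    · exact hWS heW
    · exact hWS (evencut hWev hef hU heW)
  -- a second negative edge
  obtain ⟨e', he', hee'⟩ := Finset.exists_mem_ne (s := G.negEdges Finset.univ) (by omega) e
  have hnege' : G.neg e' = true := (Finset.mem_filter.mp he').2
  -- fundamental circuit data for e
  obtain ⟨x₁, y₁, hends₁⟩ := sym2_exists (G.ends e)
  obtain ⟨vs₁, es₁, hw₁, hnd₁⟩ := reach_walk (hreach x₁ y₁)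
  obtain ⟨hdeg₁, hunb₁, hneg₁, hsupp₁⟩ := fund_spec he hends₁ hw₁ hnd₁
  -- fundamental circuit data for e'
  obtain ⟨x₂, y₂, hends₂⟩ := sym2_exists (G.ends e')
  obtain ⟨vs₂, es₂, hw₂, hnd₂⟩ := reach_walk (hreach x₂ y₂)
  obtain ⟨hdeg₂, hunb₂, hneg₂, hsupp₂⟩ := fund_spec he' hends₂ hw₂ hnd₂
  set C₁ := insert e es₁.toFinset with hC₁def
  set C₂ := insert e' es₂.toFinset with hC₂def
  have heC₁ : e ∈ C₁ := Finset.mem_insert_self _ _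
  have he'C₂ : e' ∈ C₂ := Finset.mem_insert_self _ _
  have hnes₁ : ∀ g ∈ es₁.toFinset, G.neg g ≠ true := by
    intro g hg hb
    exact (Finset.mem_sdiff.mp (hw₁.edges_mem g (List.mem_toFinset.mp hg))).2
      (Finset.mem_filter.mpr ⟨Finset.mem_univ g, hb⟩)
  have hnes₂ : ∀ g ∈ es₂.toFinset, G.neg g ≠ true := by
    intro g hg hb
    exact (Finset.mem_sdiff.mp (hw₂.edges_mem g (List.mem_toFinset.mp hg))).2
      (Finset.mem_filter.mpr ⟨Finset.mem_univ g, hb⟩)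
  have heC₂ : e ∉ C₂ := by
    intro hc
    rcases Finset.mem_insert.mp hc with h | h
    · exact hee' h.symm
    · exact hnes₂ e h hnege
  have he'C₁ : e' ∉ C₁ := by
    intro hc
    rcases Finset.mem_insert.mp hc with h | h
    · exact hee' h
    · exact hnes₁ e' h hnege'
  have hC₁even : ∀ v, Even (G.degIn C₁ v) := by
    intro v
    rw [hdeg₁ v]
    split_ifs <;> simp
  have hC₂even : ∀ v, Even (G.degIn C₂ v) := by
    intro v
    rw [hdeg₂ v]
    split_ifs <;> simp
  by_cases hint : (C₁ ∩ C₂).Nonempty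
  · -- Case A: the fundamental circuits share an edge; the symmetric difference
    -- is a balanced circuit through e (and e').
    obtain ⟨g₀, hg₀⟩ := hint
    have hg₀₁ : g₀ ∈ C₁ := (Finset.mem_inter.mp hg₀).1
    have hg₀₂ : g₀ ∈ C₂ := (Finset.mem_inter.mp hg₀).2
    have hg₀es₁ : g₀ ∈ es₁.toFinset := by
      rcases Finset.mem_insert.mp hg₀₁ with rfl | h
      · exact absurd hg₀₂ heC₂
      · exact h
    have hg₀es₂ : g₀ ∈ es₂.toFinset := by
      rcases Finset.mem_insert.mp hg₀₂ with rfl | h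
      · exact absurd hg₀₁ he'C₁
      · exact h
    set D := (C₁ ∪ C₂) \ (C₁ ∩ C₂) with hDdef
    have heD : e ∈ D := Finset.mem_sdiff.mpr
      ⟨Finset.mem_union_left _ heC₁, fun hc => heC₂ (Finset.mem_inter.mp hc).2⟩
    have he'D : e' ∈ D := Finset.mem_sdiff.mpr
      ⟨Finset.mem_union_right _ he'C₂, fun hc => he'C₁ (Finset.mem_inter.mp hc).1⟩
    have hnegD : G.negEdges D = {e, e'} := by
      ext g
      simp only [negEdges, Finset.mem_filter, Finset.mem_insert, Finset.mem_singleton]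
      constructor
      · rintro ⟨hgD, hb⟩
        have hgU : g ∈ C₁ ∪ C₂ := (Finset.mem_sdiff.mp hgD).1
        rcases Finset.mem_union.mp hgU with h | h
        · rcases Finset.mem_insert.mp h with rfl | h'
          · exact Or.inl rfl
          · exact absurd hb (hnes₁ g h')
        · rcases Finset.mem_insert.mp h with rfl | h'
          · exact Or.inr rfl
          · exact absurd hb (hnes₂ g h')
      · rintro (rfl | rfl)
        · exact ⟨heD, hnege⟩
        · exact ⟨he'D, hnege'⟩
    have hDeven : ∀ v, Even (G.degIn D v) := by
      intro v
      have h1 := degIn_union_inter (G := G) C₁ C₂ v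
      have h2 := degIn_sdiff_add (G := G)
        (Finset.inter_subset_union (s := C₁) (t := C₂)) v
      rw [← hDdef] at h2
      have h3 := Nat.even_iff.mp (hC₁even v)
      have h4 := Nat.even_iff.mp (hC₂even v)
      rw [Nat.even_iff]
      omega
    set K := D.filter (fun g => ∃ z ∈ G.ends g, G.Reach D x₁ z) with hKdef
    have hKsub : K ⊆ D := Finset.filter_subset _ _
    have hKclosed : ∀ g ∈ K, ∀ z ∈ G.ends g, G.Reach D x₁ z := by
      intro g hg z hz
      obtain ⟨hgD, z', hz', hrz'⟩ := by
        simpa only [hKdef, Finset.mem_filter] using hg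
      obtain ⟨a, b, hab⟩ := sym2_exists (G.ends g)
      have hadj : G.Adj D a b := ⟨g, hgD, hab⟩
      rw [hab, Sym2.mem_iff] at hz' hz
      rcases hz' with rfl | rfl <;> rcases hz with rfl | rfl
      · exact hrz'
      · exact Relation.ReflTransGen.tail hrz' hadj
      · exact Relation.ReflTransGen.tail hrz' (adj_symm hadj)
      · exact hrz'
    have hKmem : ∀ g ∈ D, ∀ z ∈ G.ends g, G.Reach D x₁ z → g ∈ K := by
      intro g hg z hz hr
      rw [hKdef, Finset.mem_filter]
      exact ⟨hg, z, hz, hr⟩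
    have heK : e ∈ K :=
      hKmem e heD x₁ (by rw [hends₁]; exact Sym2.mem_mk_left _ _) Relation.ReflTransGen.refl
    have hKeven : ∀ v, Even (G.degIn K v) := by
      intro v
      by_cases hr : G.Reach D x₁ v
      · have hKD : G.degIn D v = G.degIn K v := by
          rw [degIn_eq_sum_cV, degIn_eq_sum_cV]
          refine (Finset.sum_subset hKsub ?_).symm
          intro g hgD hgK
          apply cV_eq_zero
          intro hv
          exact hgK (hKmem g hgD v hv hr)
        rw [← hKD]
        exact hDeven v
      · have hK0 : G.degIn K v = 0 := by
          rw [degIn_eq_sum_cV]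
          apply Finset.sum_eq_zero
          intro g hg
          apply cV_eq_zero
          intro hv
          exact hr (hKclosed g hg v hv)
        rw [hK0]
        exact Even.zero
    have he'K : e' ∈ K := by
      by_contra hc
      have hKneg : G.negEdges K = G.negEdges C₁ := by
        rw [hneg₁]
        ext g
        simp only [negEdges, Finset.mem_filter, Finset.mem_singleton]
        constructor
        · rintro ⟨hgK, hb⟩
          have hgl : g ∈ G.negEdges D := Finset.mem_filter.mpr ⟨hKsub hgK, hb⟩
          rw [hnegD] at hgl
          rcases Finset.mem_insert.mp hgl with rfl | h
          · rfl
          · rw [Finset.mem_singleton] at h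
            subst h
            exact absurd hgK hc
        · rintro rfl
          exact ⟨heK, hnege⟩
      have hKeq := even_negpart_unique hacyc hKeven hC₁even hKneg
      have hg₀D : g₀ ∈ D := hKsub (hKeq ▸ hg₀₁)
      exact (Finset.mem_sdiff.mp hg₀D).2 hg₀
    have hDK : D = K := by
      have hDKe : ∀ v, Even (G.degIn (D \ K) v) := by
        intro v
        have h2 := degIn_sdiff_add (G := G) hKsub v
        have h3 := Nat.even_iff.mp (hDeven v)
        have h4 := Nat.even_iff.mp (hKeven v)
        rw [Nat.even_iff]
        omega
      have hsubT : D \ K ⊆ Finset.univ \ G.negEdges Finset.univ := by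
        intro g hg
        rw [Finset.mem_sdiff] at hg
        rw [Finset.mem_sdiff]
        refine ⟨Finset.mem_univ _, fun hneg => ?_⟩
        have hb : G.neg g = true := (Finset.mem_filter.mp hneg).2
        have hgl : g ∈ G.negEdges D := Finset.mem_filter.mpr ⟨hg.1, hb⟩
        rw [hnegD] at hgl
        rcases Finset.mem_insert.mp hgl with rfl | h
        · exact hg.2 heK
        · rw [Finset.mem_singleton] at h
          subst h
          exact hg.2 he'K
      have hem := acyclic_even_empty hacyc hsubT hDKe
      exact Finset.Subset.antisymm (Finset.sdiff_eq_empty_iff_subset.mp hem) hKsub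
    have hconnD : G.ConnOn D := by
      have hreachall : ∀ a ∈ G.support D, G.Reach D x₁ a := by
        intro a ha
        obtain ⟨g, hg, hag⟩ := mem_support.mp ha
        exact hKclosed g (hDK ▸ hg) a hag
      intro a ha b hb
      exact (reach_symm (hreachall a ha)).trans (hreachall b hb)
    have hdegD2 : ∀ v ∈ G.support D, G.degIn D v = 2 := by
      intro v hv
      have h1 := degIn_union_inter (G := G) C₁ C₂ v
      have h2 := degIn_sdiff_add (G := G)
        (Finset.inter_subset_union (s := C₁) (t := C₂)) v
      rw [← hDdef] at h2
      have hd1 := hdeg₁ v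
      have hd2 := hdeg₂ v
      have hpos : 1 ≤ G.degIn D v := by
        obtain ⟨g, hg, hvg⟩ := mem_support.mp hv
        exact degIn_pos hg hvg
      have heven := Nat.even_iff.mp (hDeven v)
      have hIv : v ∈ vs₁ → v ∈ vs₂ → 1 ≤ G.degIn (C₁ ∩ C₂) v := by
        intro hm1 hm2
        by_cases hvg₀ : v ∈ G.ends g₀
        · exact degIn_pos hg₀ hvg₀
        · obtain ⟨a, b, hab⟩ := sym2_exists (G.ends g₀)
          have haends : a ∈ G.ends g₀ := by rw [hab]; exact Sym2.mem_mk_left _ _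
          have hav : v ≠ a := fun hc => hvg₀ (hc ▸ haends)
          have ha₁ : a ∈ vs₁ := hw₁.ends_mem (List.mem_toFinset.mp hg₀es₁) a haends
          have ha₂ : a ∈ vs₂ := hw₂.ends_mem (List.mem_toFinset.mp hg₀es₂) a haends
          obtain ⟨h', hh₁, hh₂, hvh⟩ := shared_edge hacyc hw₁ hw₂ hm1 hm2 ha₁ ha₂ hav
          exact degIn_pos (Finset.mem_inter.mpr
            ⟨Finset.mem_insert_of_mem hh₁, Finset.mem_insert_of_mem hh₂⟩) hvh
      by_cases hm1 : v ∈ vs₁ <;> by_cases hm2 : v ∈ vs₂ <;>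
        simp only [hm1, hm2, if_true, if_false] at hd1 hd2
      · have hI := hIv hm1 hm2
        omega
      · omega
      · omega
      · omega
    have hcircD : G.IsCircuit D := ⟨⟨e, heD⟩, hconnD, hdegD2⟩
    have hbal : G.IsBalancedCircuit D := by
      refine ⟨hcircD, ?_⟩
      rw [hnegD, Finset.card_pair (fun hc => hee' hc.symm)]
      simp
    exact final D D (le_refl _) heD hDeven (Or.inl hbal)
  · -- Case B: edge-disjoint fundamental circuits
    have hCCempty : C₁ ∩ C₂ = ∅ := Finset.not_nonempty_iff_eq_empty.mp hint
    have hdisjC : Disjoint C₁ C₂ := Finset.disjoint_iff_inter_eq_empty.mpr hCCempty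
    have hnot2 : ¬ 2 ≤ (G.support C₁ ∩ G.support C₂).card := by
      intro h2
      obtain ⟨p, hp, q, hq, hpq⟩ := Finset.one_lt_card.mp (show 1 < (G.support C₁ ∩ G.support C₂).card by omega)
      have hp1 : p ∈ vs₁ := (hsupp₁ p).mp (Finset.mem_inter.mp hp).1
      have hp2 : p ∈ vs₂ := (hsupp₂ p).mp (Finset.mem_inter.mp hp).2
      have hq1 : q ∈ vs₁ := (hsupp₁ q).mp (Finset.mem_inter.mp hq).1
      have hq2 : q ∈ vs₂ := (hsupp₂ q).mp (Finset.mem_inter.mp hq).2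
      obtain ⟨h', hh₁, hh₂, -⟩ := shared_edge hacyc hw₁ hw₂ hp1 hp2 hq1 hq2 hpq
      have : h' ∈ C₁ ∩ C₂ := Finset.mem_inter.mpr
        ⟨Finset.mem_insert_of_mem hh₁, Finset.mem_insert_of_mem hh₂⟩
      rw [hCCempty] at this
      exact absurd this (Finset.notMem_empty _)
    by_cases hcard0 : G.support C₁ ∩ G.support C₂ = ∅
    · -- Case B1: vertex-disjoint fundamental circuits: long barbell
      have hdisjsup : Disjoint (G.support C₁) (G.support C₂) :=
        Finset.disjoint_iff_inter_eq_empty.mpr hcard0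
      have hx₁A : x₁ ∈ G.support C₁ :=
        mem_support_of_edge heC₁ (by rw [hends₁]; exact Sym2.mem_mk_left _ _)
      have hx₂B : x₂ ∈ G.support C₂ :=
        mem_support_of_edge he'C₂ (by rw [hends₂]; exact Sym2.mem_mk_left _ _)
      set NS : Set ℕ := {n | ∃ (p r : G.V) (ws : List G.V) (fs : List G.E),
        p ∈ G.support C₁ ∧ r ∈ G.support C₂ ∧
          Walk G (Finset.univ \ G.negEdges Finset.univ) p r ws fs ∧
          ws.Nodup ∧ fs.length = n} with hNSdef
      have hNSne : NS.Nonempty := by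
        obtain ⟨ws, fs, hw, hnd⟩ := reach_walk (hreach x₁ x₂)
        exact ⟨fs.length, x₁, x₂, ws, fs, hx₁A, hx₂B, hw, hnd, rfl⟩
      obtain ⟨u, v, ws, fs, huA, hvB, hwQ, hndQ, hlenQ⟩ := Nat.sInf_mem hNSne
      have hmin : ∀ m ∈ NS, sInf NS ≤ m := fun m hm => Nat.sInf_le hm
      have huv : u ≠ v := by
        intro hc
        subst hc
        exact Finset.disjoint_left.mp hdisjsup huA hvB
      have hfsne : fs ≠ [] := by
        intro hc
        subst hc
        obtain ⟨h1, -⟩ := hwQ.nil_inv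
        exact huv h1.symm
      have hwsA : ∀ z ∈ ws, z ∈ G.support C₁ → z = u := by
        intro z hz hzA
        by_contra hzu
        obtain ⟨l₁, l₂, hws⟩ := List.append_of_mem hz
        have hl₁ne : l₁ ≠ [] := by
          intro hc
          subst hc
          obtain ⟨t, ht⟩ := hwQ.head_eq
          rw [hws] at ht
          simp at ht
          exact hzu ht.1
        obtain ⟨fs₁, fs₂, hfseq, hflen, hwa, hwb⟩ := hwQ.split l₁ z l₂ hws
        have hndz : (z :: l₂).Nodup := by
          have hsl : (z :: l₂).Sublist ws := by
            rw [hws]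
            exact List.sublist_append_right _ _
          exact hndQ.sublist hsl
        have hm : fs₂.length ∈ NS := ⟨z, v, z :: l₂, fs₂, hzA, hvB, hwb, hndz, rfl⟩
        have h1 := congrArg List.length hfseq
        have h2 := hwQ.length_eq
        have h3 := congrArg List.length hws
        have h4 := hwa.length_eq
        simp only [List.length_append, List.length_cons] at h1 h2 h3 h4
        have h5 := hmin _ hm
        have hl₁pos : 0 < l₁.length := List.length_pos_iff.mpr hl₁ne
        omega
      have hwsB : ∀ z ∈ ws, z ∈ G.support C₂ → z = v := by
        intro z hz hzB
        by_contra hzv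
        obtain ⟨l₁, l₂, hws⟩ := List.append_of_mem hz
        have hl₂ne : l₂ ≠ [] := by
          intro hc
          subst hc
          exact hzv (hwQ.eq_last l₁ z hws)
        obtain ⟨fs₁, fs₂, hfseq, hflen, hwa, hwb⟩ := hwQ.split l₁ z l₂ hws
        have hnd1 : (l₁ ++ [z]).Nodup := by
          have hsl : (l₁ ++ [z]).Sublist ws := by
            rw [hws]
            apply (List.append_sublist_append_left l₁).mpr
            exact List.cons_sublist_cons.mpr (List.nil_sublist _)
          exact hndQ.sublist hsl
        have hm : fs₁.length ∈ NS := ⟨u, z, l₁ ++ [z], fs₁, huA, hzB, hwa, hnd1, rfl⟩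
        have h2 := hwQ.length_eq
        have h3 := congrArg List.length hws
        simp only [List.length_append, List.length_cons] at h2 h3
        have h5 := hmin _ hm
        have hl₂pos : 0 < l₂.length := List.length_pos_iff.mpr hl₂ne
        omega
      set Q := fs.toFinset with hQdef
      have hQne : Q.Nonempty := by
        cases fs with
        | nil => exact absurd rfl hfsne
        | cons f fs' => exact ⟨f, by rw [hQdef]; simp⟩
      have hsuppQ : ∀ z, z ∈ G.support Q ↔ z ∈ ws :=
        fun z => ⟨fun hz => hwQ.support_subset z hz, fun hz => hwQ.mem_support hfsne z hz⟩
      have hpath : G.IsPath Q u v := by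
        refine ⟨hQne, ?_, huv, (hsuppQ u).mpr hwQ.start_mem, (hsuppQ v).mpr hwQ.end_mem,
          ?_, ?_, ?_⟩
        · intro a ha b hb
          have ra := hwQ.reach a ((hsuppQ a).mp ha)
          have rb := hwQ.reach b ((hsuppQ b).mp hb)
          exact (reach_symm ra).trans rb
        · have h := hwQ.degIn_formula hndQ u
          rw [if_pos rfl, if_neg huv, if_pos hwQ.start_mem, ← hQdef] at h
          omega
        · have h := hwQ.degIn_formula hndQ v
          rw [if_neg (Ne.symm huv), if_pos rfl, if_pos hwQ.end_mem, ← hQdef] at h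
          omega
        · intro z hz hzu hzv
          have h := hwQ.degIn_formula hndQ z
          rw [if_neg hzu, if_neg hzv, if_pos ((hsuppQ z).mp hz), ← hQdef] at h
          omega
      have hQA : G.support Q ∩ G.support C₁ = {u} := by
        ext z
        simp only [Finset.mem_inter, Finset.mem_singleton]
        constructor
        · rintro ⟨hzQ, hzA⟩
          exact hwsA z ((hsuppQ z).mp hzQ) hzA
        · rintro rfl
          exact ⟨(hsuppQ _).mpr hwQ.start_mem, huA⟩
      have hQB : G.support Q ∩ G.support C₂ = {v} := by
        ext z
        simp only [Finset.mem_inter, Finset.mem_singleton]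
        constructor
        · rintro ⟨hzQ, hzB⟩
          exact hwsB z ((hsuppQ z).mp hzQ) hzB
        · rintro rfl
          exact ⟨(hsuppQ _).mpr hwQ.end_mem, hvB⟩
      have hdisjQ1 : Disjoint Q C₁ := by
        rw [Finset.disjoint_left]
        intro g hgQ hgC
        obtain ⟨a, b, hab', hends'⟩ := hwQ.edge_ends_ne hndQ (List.mem_toFinset.mp hgQ)
        have haA : a ∈ G.support C₁ :=
          mem_support_of_edge hgC (by rw [hends']; exact Sym2.mem_mk_left _ _)
        have hbA : b ∈ G.support C₁ :=
          mem_support_of_edge hgC (by rw [hends']; exact Sym2.mem_mk_right _ _)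
        have haws : a ∈ ws := hwQ.ends_mem (List.mem_toFinset.mp hgQ) a
          (by rw [hends']; exact Sym2.mem_mk_left _ _)
        have hbws : b ∈ ws := hwQ.ends_mem (List.mem_toFinset.mp hgQ) b
          (by rw [hends']; exact Sym2.mem_mk_right _ _)
        have ha' := hwsA a haws haA
        have hb' := hwsA b hbws hbA
        exact hab' (ha'.trans hb'.symm)
      have hdisjQ2 : Disjoint Q C₂ := by
        rw [Finset.disjoint_left]
        intro g hgQ hgC
        obtain ⟨a, b, hab', hends'⟩ := hwQ.edge_ends_ne hndQ (List.mem_toFinset.mp hgQ)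
        have haA : a ∈ G.support C₂ :=
          mem_support_of_edge hgC (by rw [hends']; exact Sym2.mem_mk_left _ _)
        have hbA : b ∈ G.support C₂ :=
          mem_support_of_edge hgC (by rw [hends']; exact Sym2.mem_mk_right _ _)
        have haws : a ∈ ws := hwQ.ends_mem (List.mem_toFinset.mp hgQ) a
          (by rw [hends']; exact Sym2.mem_mk_left _ _)
        have hbws : b ∈ ws := hwQ.ends_mem (List.mem_toFinset.mp hgQ) b
          (by rw [hends']; exact Sym2.mem_mk_right _ _)
        have ha' := hwsB a haws haA
        have hb' := hwsB b hbws hbA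
        exact hab' (ha'.trans hb'.symm)
      have hlb : G.IsLongBarbell (C₁ ∪ C₂ ∪ Q) :=
        ⟨C₁, C₂, Q, u, v, hunb₁, hunb₂, hdisjsup, hpath, hQA, hQB, hdisjQ1, hdisjQ2, rfl⟩
      exact final (C₁ ∪ C₂ ∪ Q) C₁
        (fun g hg => Finset.mem_union_left _ (Finset.mem_union_left _ hg))
        heC₁ hC₁even (Or.inr (Or.inr hlb))
    · -- Case B2: exactly one common vertex: short barbell
      have hpos : 0 < (G.support C₁ ∩ G.support C₂).card :=
        Finset.card_pos.mpr (Finset.nonempty_of_ne_empty hcard0)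
      have hcard1 : (G.support C₁ ∩ G.support C₂).card = 1 := by omega
      have hsb : G.IsShortBarbell (C₁ ∪ C₂) :=
        ⟨C₁, C₂, hunb₁, hunb₂, hdisjC, hcard1, rfl⟩
      exact final (C₁ ∪ C₂) C₁ Finset.subset_union_left heC₁ hC₁even
        (Or.inr (Or.inl hsb))
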